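/- Let (Ω, P̃) be a probability space and Φ : Ω → [0, ∞) measurable with E[e^{−Φ²/2}] > 0. Define f(λ) = (2π)^{−1/2} E[exp(−(λ+Φ)²/2)]. Then for all λ ≥ 0, f(λ) ≥ f(0) · exp(−λ²/2 − λ/(√(2πe)·f(0))). -/

import Mathlib

open MeasureTheory

lemma aux_aexp_bound {a : ℝ} (ha : 0 ≤ a) :
    a * Real.exp (-a ^ 2 / 2) ≤ Real.exp (-(1:ℝ) / 2) := by
  have h1 : a ≤ Real.exp ((a ^ 2 - 1) / 2) := by
    have h := Real.add_one_le_exp ((a ^ 2 - 1) / 2)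
    nlinarith [sq_nonneg (a - 1)]
  calc a * Real.exp (-a ^ 2 / 2)
      ≤ Real.exp ((a ^ 2 - 1) / 2) * Real.exp (-a ^ 2 / 2) :=
        mul_le_mul_of_nonneg_right h1 (Real.exp_pos _).le
    _ = Real.exp (-(1:ℝ) / 2) := by
        rw [← Real.exp_add]; congr 1; ring

theorem density_right_tail_lower {Ω : Type*} [MeasurableSpace Ω]
    (P : Measure Ω) [IsProbabilityMeasure P] (Φ : Ω → ℝ) (hΦ : Measurable Φ)
    (hΦ0 : ∀ ω, 0 ≤ Φ ω)
    (hpos : 0 < ∫ ω, Real.exp (-(Φ ω) ^ 2 / 2) ∂P)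
    (f : ℝ → ℝ)
    (hf : ∀ lam : ℝ, f lam =
      (Real.sqrt (2 * Real.pi))⁻¹ * ∫ ω, Real.exp (-(lam + Φ ω) ^ 2 / 2) ∂P) :
    ∀ lam : ℝ, 0 ≤ lam →
      f 0 * Real.exp (-lam ^ 2 / 2 -
        lam / (Real.sqrt (2 * Real.pi * Real.exp 1) * f 0)) ≤ f lam := by
  intro lam hlam
  set w : Ω → ℝ := fun ω => Real.exp (-(Φ ω) ^ 2 / 2) with hw_def
  have hw_meas : Measurable w := (((hΦ.pow_const 2).neg).div_const 2).exp
  have hw_pos : ∀ ω, 0 < w ω := fun ω => Real.exp_pos _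
  have hw_le1 : ∀ ω, w ω ≤ 1 := by
    intro ω
    rw [show (1:ℝ) = Real.exp 0 by simp]
    exact Real.exp_le_exp.2 (by nlinarith [sq_nonneg (Φ ω)])
  have hint_w : Integrable w P := by
    refine (integrable_const (1:ℝ)).mono' hw_meas.aestronglyMeasurable
      (ae_of_all _ fun ω => ?_)
    rw [Real.norm_eq_abs, abs_of_pos (hw_pos ω)]; exact hw_le1 ω
  set Z : ℝ := ∫ ω, w ω ∂P with hZ_def
  have hZ : 0 < Z := hpos
  -- the weighted measure
  set ν : Measure Ω := P.withDensity fun ω => ((w ω).toNNReal : ENNReal) with hν_def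
  have hwt_meas : Measurable fun ω => (w ω).toNNReal := hw_meas.real_toNNReal
  have hν_univ : ν Set.univ = ENNReal.ofReal Z := by
    rw [hν_def, withDensity_apply _ MeasurableSet.univ, setLIntegral_univ]
    show (∫⁻ x, ENNReal.ofReal (w x) ∂P) = ENNReal.ofReal Z
    rw [← ofReal_integral_eq_lintegral_ofReal hint_w (ae_of_all _ fun ω => (hw_pos ω).le)]
  haveI : IsFiniteMeasure ν := ⟨by rw [hν_univ]; exact ENNReal.ofReal_lt_top⟩
  haveI : NeZero ν := ⟨by
    rw [← Measure.measure_univ_ne_zero, hν_univ]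
    exact (ENNReal.ofReal_pos.2 hZ).ne'⟩
  -- integral conversion
  have hconv : ∀ g : Ω → ℝ, ∫ ω, g ω ∂ν = ∫ ω, w ω * g ω ∂P := by
    intro g
    rw [hν_def, integral_withDensity_eq_integral_smul hwt_meas]
    refine integral_congr_ae (ae_of_all _ fun ω => ?_)
    simp [NNReal.smul_def, Real.coe_toNNReal _ (hw_pos ω).le]
  -- the function
  set F : Ω → ℝ := fun ω => -lam * Φ ω with hF_def
  have hbound : ∀ ω, |w ω * F ω| ≤ lam * Real.exp (-(1:ℝ)/2) := by
    intro ω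
    have h1 : |w ω * F ω| = lam * (Φ ω * w ω) := by
      simp only [hF_def]
      rw [abs_of_nonpos (by nlinarith [mul_nonneg (mul_nonneg (hw_pos ω).le hlam) (hΦ0 ω)])]
      ring
    rw [h1]
    have := aux_aexp_bound (hΦ0 ω)
    have h2 : Φ ω * w ω ≤ Real.exp (-(1:ℝ)/2) := by
      simpa [hw_def] using aux_aexp_bound (hΦ0 ω)
    exact mul_le_mul_of_nonneg_left h2 hlam
  have hFi : Integrable F ν := by
    rw [hν_def, integrable_withDensity_iff_integrable_smul hwt_meas]
    refine (integrable_const (lam * Real.exp (-(1:ℝ)/2))).mono'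
      ((hw_meas.aestronglyMeasurable.smul ((hΦ.const_mul (-lam)).aestronglyMeasurable)).congr
        (ae_of_all _ fun ω => by
          simp only [NNReal.smul_def, Real.coe_toNNReal _ (hw_pos ω).le, smul_eq_mul,
            Pi.mul_apply, hF_def]))
      (ae_of_all _ fun ω => by
        simp only [NNReal.smul_def, Real.coe_toNNReal _ (hw_pos ω).le, smul_eq_mul,
          Real.norm_eq_abs]
        exact hbound ω)
  have hEFbound : ∀ ω, |w ω * Real.exp (F ω)| ≤ 1 := by
    intro ω
    rw [abs_of_nonneg (by positivity)]
    have h1 : Real.exp (F ω) ≤ 1 := by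
      rw [show (1:ℝ) = Real.exp 0 by simp]
      refine Real.exp_le_exp.2 ?_
      simp only [hF_def]
      nlinarith [mul_nonneg hlam (hΦ0 ω)]
    calc w ω * Real.exp (F ω) ≤ 1 * 1 :=
      mul_le_mul (hw_le1 ω) h1 (Real.exp_pos _).le zero_le_one
    _ = 1 := by ring
  have hEFi : Integrable (Real.exp ∘ F) ν := by
    rw [hν_def, integrable_withDensity_iff_integrable_smul hwt_meas]
    refine (integrable_const (1:ℝ)).mono'
      ((hw_meas.aestronglyMeasurable.smul
        (((hΦ.const_mul (-lam)).exp).aestronglyMeasurable)).congr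
        (ae_of_all _ fun ω => by
          simp [NNReal.smul_def, Real.coe_toNNReal _ (hw_pos ω).le, smul_eq_mul,
            Function.comp, hF_def]))
      (ae_of_all _ fun ω => by
        simp only [NNReal.smul_def, Real.coe_toNNReal _ (hw_pos ω).le, smul_eq_mul,
          Real.norm_eq_abs, Function.comp]
        exact hEFbound ω)
  -- Jensen
  have hjensen := convexOn_exp.map_average_le Real.continuous_exp.continuousOn
    isClosed_univ (ae_of_all ν fun ω => Set.mem_univ (F ω)) hFi hEFi
  rw [average_eq, average_eq, measureReal_def, hν_univ, ENNReal.toReal_ofReal hZ.le, hconv, hconv,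
    smul_eq_mul, smul_eq_mul] at hjensen
  -- bound the mean
  have hintwF : Integrable (fun ω => w ω * F ω) P := by
    refine (integrable_const (lam * Real.exp (-(1:ℝ)/2))).mono'
      (hw_meas.aestronglyMeasurable.mul ((hΦ.const_mul (-lam)).aestronglyMeasurable))
      (ae_of_all _ fun ω => hbound ω)
  have hmean : -(lam * Real.exp (-(1:ℝ)/2)) ≤ ∫ ω, w ω * F ω ∂P := by
    have := integral_mono (integrable_const (-(lam * Real.exp (-(1:ℝ)/2)))) hintwF
      (fun ω => neg_le_of_abs_le (hbound ω))
    simpa using this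
  set J : ℝ := ∫ ω, w ω * Real.exp (F ω) ∂P with hJ_def
  have hJlb : Z * Real.exp (-(lam * Real.exp (-(1:ℝ)/2)) / Z) ≤ J := by
    have h1 : Real.exp (-(lam * Real.exp (-(1:ℝ)/2)) / Z) ≤ Real.exp (Z⁻¹ * ∫ ω, w ω * F ω ∂P) := by
      refine Real.exp_le_exp.2 ?_
      rw [div_eq_inv_mul]
      exact mul_le_mul_of_nonneg_left hmean (inv_pos.2 hZ).le
    have h2 := h1.trans hjensen
    calc Z * Real.exp (-(lam * Real.exp (-(1:ℝ)/2)) / Z) ≤ Z * (Z⁻¹ * J) :=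
          mul_le_mul_of_nonneg_left h2 hZ.le
      _ = J := by field_simp
  -- express f lam
  have hpt : ∀ ω, Real.exp (-(lam + Φ ω) ^ 2 / 2) =
      Real.exp (-lam ^ 2 / 2) * (w ω * Real.exp (F ω)) := by
    intro ω
    rw [hw_def]
    simp only [← Real.exp_add]
    congr 1
    simp only [hF_def]
    ring
  have hflam : f lam = (Real.sqrt (2 * Real.pi))⁻¹ * (Real.exp (-lam ^ 2 / 2) * J) := by
    rw [hf lam, hJ_def]
    congr 1
    rw [← integral_const_mul]
    exact integral_congr_ae (ae_of_all _ hpt)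
  have hf0 : f 0 = (Real.sqrt (2 * Real.pi))⁻¹ * Z := by
    rw [hf 0, hZ_def]
    congr 1
    refine integral_congr_ae (ae_of_all _ fun ω => ?_)
    simp [hw_def]
  -- denominator simplification
  have h2pi : (0:ℝ) < 2 * Real.pi := by positivity
  have hsqrt_pos : 0 < Real.sqrt (2 * Real.pi) := Real.sqrt_pos.2 h2pi
  have hf0pos : 0 < f 0 := by rw [hf0]; positivity
  have hden : Real.sqrt (2 * Real.pi * Real.exp 1) * f 0 = Real.exp ((1:ℝ)/2) * Z := by
    rw [hf0, Real.sqrt_mul h2pi.le, Real.exp_half]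
    field_simp
  have hexp_eq : -lam ^ 2 / 2 - lam / (Real.sqrt (2 * Real.pi * Real.exp 1) * f 0)
      = -lam ^ 2 / 2 + (-(lam * Real.exp (-(1:ℝ)/2)) / Z) := by
    rw [hden]
    have hexpinv : Real.exp (-(1:ℝ)/2) = (Real.exp ((1:ℝ)/2))⁻¹ := by
      rw [← Real.exp_neg]; norm_num
    have h3 : lam / (Real.exp ((1:ℝ)/2) * Z) = lam * Real.exp (-(1:ℝ)/2) / Z := by
      rw [hexpinv]
      field_simp
    rw [h3]
    ring
  rw [hexp_eq, hflam, hf0, Real.exp_add]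
  calc (Real.sqrt (2 * Real.pi))⁻¹ * Z *
        (Real.exp (-lam ^ 2 / 2) * Real.exp (-(lam * Real.exp (-(1:ℝ)/2)) / Z))
      = (Real.sqrt (2 * Real.pi))⁻¹ * (Real.exp (-lam ^ 2 / 2) *
          (Z * Real.exp (-(lam * Real.exp (-(1:ℝ)/2)) / Z))) := by ring
    _ ≤ (Real.sqrt (2 * Real.pi))⁻¹ * (Real.exp (-lam ^ 2 / 2) * J) := by
        refine mul_le_mul_of_nonneg_left ?_ (by positivity)
        exact mul_le_mul_of_nonneg_left hJlb (Real.exp_pos _).le
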